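/- Fix a real R ≠ 0 and define G : (Fin D → ℝ) → ℝ by G x = 1 − (Σ_μ ε μ * (x μ)²)/(4R²). For a function f : (Fin D → ℝ) → ℝ define (e_n f)(x) := G x * ∂_n f x, where ∂_n f x is the partial derivative of f at x in the n-th coordinate direction. Then for every twice continuously differentiable f : (Fin D → ℝ) → ℝ, all n, m : Fin D and all x : Fin D → ℝ: e_n (e_m f) x − e_m (e_n f) x = −(1/(2R²)) * ( (ε n * x n) * (e_m f) x − (ε m * x m) * (e_n f) x ). (The anholonomy coefficients of the frame e_n = G ∂_n are ℰ_{nm}{}^l = −(1/(2R²))(x_n δ_m^l − x_m δ_n^l).) -/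

import Mathlib

noncomputable section

/-- The flat `so(p,q)` metric sign factor. -/
def eps (p : ℕ) {D : ℕ} (m : Fin D) : ℝ := if (m : ℕ) < p then -1 else 1

theorem stmt_9 (p q : ℕ) (R : ℝ) (hR : R ≠ 0) :
    let D := p + q
    let G : (Fin D → ℝ) → ℝ := fun x => 1 - (∑ μ : Fin D, eps p μ * (x μ) ^ 2) / (4 * R ^ 2)
    let pd : Fin D → ((Fin D → ℝ) → ℝ) → ((Fin D → ℝ) → ℝ) :=
      fun n f x => fderiv ℝ f x (Pi.single n 1)
    let e : Fin D → ((Fin D → ℝ) → ℝ) → ((Fin D → ℝ) → ℝ) :=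
      fun n f x => G x * pd n f x
    ∀ f : (Fin D → ℝ) → ℝ, ContDiff ℝ 2 f →
      ∀ (n m : Fin D) (x : Fin D → ℝ),
        e n (e m f) x - e m (e n f) x =
          -(1 / (2 * R ^ 2)) *
            ((eps p n * x n) * e m f x - (eps p m * x m) * e n f x) := by
  intro D G pd e f hf n m x
  -- derivative of G at x
  have hQ : HasFDerivAt (fun z : Fin D → ℝ => ∑ μ : Fin D, eps p μ * z μ ^ 2)
      (∑ μ : Fin D, (eps p μ * (2 * x μ)) •
        (ContinuousLinearMap.proj μ : (Fin D → ℝ) →L[ℝ] ℝ)) x := by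
    apply HasFDerivAt.fun_sum
    intro μ _
    have h1 : HasFDerivAt (fun z : Fin D → ℝ => z μ)
        (ContinuousLinearMap.proj μ : (Fin D → ℝ) →L[ℝ] ℝ) x := by
      exact (ContinuousLinearMap.proj μ : (Fin D → ℝ) →L[ℝ] ℝ).hasFDerivAt
    have h2 := (h1.mul h1).const_mul (eps p μ)
    have hfn : (fun z : Fin D → ℝ => eps p μ * z μ ^ 2)
        = fun z : Fin D → ℝ => eps p μ * (z μ * z μ) := by
      funext z; ring
    rw [hfn]
    refine h2.congr_fderiv ?_
    ext v
    simp only [ContinuousLinearMap.smul_apply, ContinuousLinearMap.add_apply,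
      ContinuousLinearMap.proj_apply, smul_eq_mul]
    ring
  have hG : HasFDerivAt G
      (-( (4 * R ^ 2)⁻¹ • (∑ μ : Fin D, (eps p μ * (2 * x μ)) •
        (ContinuousLinearMap.proj μ : (Fin D → ℝ) →L[ℝ] ℝ)))) x := by
    have hGfun : G = fun z => 1 - (∑ μ : Fin D, eps p μ * z μ ^ 2) * (4 * R ^ 2)⁻¹ := by
      funext z
      show 1 - (∑ μ : Fin D, eps p μ * z μ ^ 2) / (4 * R ^ 2) = _
      rw [div_eq_mul_inv]
    have h2 := (hQ.mul_const ((4 * R ^ 2)⁻¹)).const_sub 1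
    rw [hGfun]
    convert h2 using 1
    try module
  have hGval : ∀ k : Fin D, fderiv ℝ G x (Pi.single k 1) = -(eps p k * x k) / (2 * R ^ 2) := by
    intro k
    rw [hG.fderiv]
    have hs : (∑ μ : Fin D, (eps p μ * (2 * x μ)) •
        (ContinuousLinearMap.proj μ : (Fin D → ℝ) →L[ℝ] ℝ)) (Pi.single k 1)
        = eps p k * (2 * x k) := by
      rw [ContinuousLinearMap.sum_apply]
      rw [Finset.sum_eq_single k]
      · simp
      · intro b _ hb
        simp [Pi.single_apply, hb]
      · simp
    simp only [ContinuousLinearMap.neg_apply, ContinuousLinearMap.smul_apply, hs, smul_eq_mul]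
    field_simp
    ring
  -- derivatives of f
  have hfd : Differentiable ℝ f := hf.differentiable (by norm_num)
  have hf' : Differentiable ℝ (fderiv ℝ f) := by
    have := (contDiff_succ_iff_fderiv.mp (show ContDiff ℝ (1 + 1) f by exact_mod_cast hf)).2.2
    exact this.differentiable one_ne_zero
  -- derivative of pd k f at any point
  have hpd : ∀ (k : Fin D) (y : Fin D → ℝ), HasFDerivAt (pd k f)
      ((fderiv ℝ (fderiv ℝ f) y).flip (Pi.single k 1)) y := by
    intro k y
    have h := (hf' y).hasFDerivAt.clm_apply (hasFDerivAt_const (Pi.single k 1) y)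
    simpa using h
  have hsymm : ∀ v w, fderiv ℝ (fderiv ℝ f) x v w = fderiv ℝ (fderiv ℝ f) x w v :=
    second_derivative_symmetric (fun y => (hfd y).hasFDerivAt) (hf' x).hasFDerivAt
  -- product rule for e k f
  have hekf : ∀ (k j : Fin D), fderiv ℝ (e k f) x (Pi.single j 1)
      = G x * fderiv ℝ (fderiv ℝ f) x (Pi.single j 1) (Pi.single k 1)
        + pd k f x * (-(eps p j * x j) / (2 * R ^ 2)) := by
    intro k j
    have h := hG.mul (hpd k x)
    have : fderiv ℝ (e k f) x = G x • (fderiv ℝ (fderiv ℝ f) x).flip (Pi.single k 1)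
        + pd k f x • (-( (4 * R ^ 2)⁻¹ • (∑ μ : Fin D, (eps p μ * (2 * x μ)) •
          (ContinuousLinearMap.proj μ : (Fin D → ℝ) →L[ℝ] ℝ)))) := h.fderiv
    rw [this]
    have := hGval j
    rw [hG.fderiv] at this
    simp only [ContinuousLinearMap.add_apply, ContinuousLinearMap.smul_apply,
      ContinuousLinearMap.flip_apply, smul_eq_mul, this]
  -- unfold e
  show G x * fderiv ℝ (e m f) x (Pi.single n 1) - G x * fderiv ℝ (e n f) x (Pi.single m 1) = _
  rw [hekf m n, hekf n m, hsymm (Pi.single n 1) (Pi.single m 1)]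
  show _ = -(1 / (2 * R ^ 2)) * ((eps p n * x n) * (G x * pd m f x)
    - (eps p m * x m) * (G x * pd n f x))
  field_simp
  ring
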